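/- Fix n ≥ 1 and set m = 4^n. Partition the edge set of G_{n,3} = C_m^{□3} (vertices (x,y,z) ∈ (ZMod m)³) into three classes X, Y, Z as follows: an edge {(x,y,z),(x+1,y,z)} lies in Z if x+y+z = -1 in ZMod m and in X otherwise; an edge {(x,y,z),(x,y+1,z)} lies in X if x+y+z = -1 and in Y otherwise; an edge {(x,y,z),(x,y,z+1)} lies in Y if x+y+z = -1 and in Z otherwise. Then each of the three classes, viewed as a spanning subgraph of G_{n,3}, is 2-regular, every connected component of each class is a cycle with exactly m² = 4^{2n} vertices, and each class has exactly m = 4^n connected components; hence this partition decomposes G_{n,3} into 3·4^n disjoint cycles of length 4^{2n}. -/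

import Mathlib

open SimpleGraph

/-- The hypercube graph `Q_n` on vertex set `Fin n → Bool`:
two vertices are adjacent iff they differ in exactly one coordinate. -/
def hypercube (n : ℕ) : SimpleGraph (Fin n → Bool) where
  Adj u v := ∃ i, u i ≠ v i ∧ ∀ j, j ≠ i → u j = v j
  symm := by
    constructor
    rintro u v ⟨i, hne, hrest⟩
    exact ⟨i, hne.symm, fun j hj => (hrest j hj).symm⟩
  loopless := by
    constructor
    rintro u ⟨i, hne, -⟩
    exact hne rfl

/-- The cycle graph `C_m` on `ZMod m`: `i` and `j` are adjacent iff
`i - j = 1` or `j - i = 1`. -/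
def cycGraph (m : ℕ) : SimpleGraph (ZMod m) :=
  SimpleGraph.fromRel (fun i j => i - j = 1)

/-- The graph `C_m^{□k}` on `Fin k → ZMod m`: two vertices are adjacent iff they
differ in exactly one coordinate, and in that coordinate they differ by `±1`. -/
def torusGraph (m k : ℕ) : SimpleGraph (Fin k → ZMod m) where
  Adj u v := ∃ i, (u i ≠ v i ∧ (u i - v i = 1 ∨ v i - u i = 1)) ∧ ∀ j, j ≠ i → u j = v j
  symm := by
    constructor
    rintro u v ⟨i, ⟨hne, hpm⟩, hrest⟩
    exact ⟨i, ⟨hne.symm, hpm.symm⟩, fun j hj => (hrest j hj).symm⟩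
  loopless := by
    constructor
    rintro u ⟨i, ⟨hne, -⟩, -⟩
    exact hne rfl

private lemma torus_adj_comp (m k : ℕ) (σ : Equiv.Perm (Fin k)) {u v : Fin k → ZMod m}
    (h : (torusGraph m k).Adj u v) : (torusGraph m k).Adj (u ∘ σ) (v ∘ σ) := by
  obtain ⟨i, ⟨hne, hpm⟩, hrest⟩ := h
  refine ⟨σ.symm i, ⟨?_, ?_⟩, ?_⟩
  · simpa using hne
  · simpa using hpm
  · intro j hj
    have : σ j ≠ i := fun hc => hj (by simp [← hc])
    simpa using hrest (σ j) this

/-- The automorphism of `C_m^{□k}` induced by a permutation `σ` of the axes,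
sending a vertex `v : Fin k → ZMod m` to `v ∘ σ⁻¹`. -/
def permIso (m k : ℕ) (σ : Equiv.Perm (Fin k)) : torusGraph m k ≃g torusGraph m k where
  toEquiv := Equiv.arrowCongr σ (Equiv.refl (ZMod m))
  map_rel_iff' := by
    intro u v
    constructor
    · intro h
      have h2 := torus_adj_comp m k σ h
      have hu : (Equiv.arrowCongr σ (Equiv.refl (ZMod m)) u) ∘ σ = u := by
        funext x; simp
      have hv : (Equiv.arrowCongr σ (Equiv.refl (ZMod m)) v) ∘ σ = v := by
        funext x; simp
      rwa [hu, hv] at h2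
    · intro h
      have h2 := torus_adj_comp m k σ.symm h
      have hu : u ∘ ⇑σ.symm = Equiv.arrowCongr σ (Equiv.refl (ZMod m)) u := by
        funext x; simp
      have hv : v ∘ ⇑σ.symm = Equiv.arrowCongr σ (Equiv.refl (ZMod m)) v := by
        funext x; simp
      rwa [hu, hv] at h2

/-- A Hamilton decomposition of a simple graph `G`: a family of Hamiltonian cycles
whose edge sets are pairwise disjoint and together cover every edge of `G`. -/
def IsHamDecomp {V : Type*} [DecidableEq V] (G : SimpleGraph V) {ι : Type*}
    (C : ι → Σ v, G.Walk v v) : Prop :=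
  (∀ i, (C i).2.IsHamiltonianCycle) ∧
  (∀ i j, i ≠ j → ∀ e, e ∈ (C i).2.edges → e ∉ (C j).2.edges) ∧
  (∀ e ∈ G.edgeSet, ∃ i, e ∈ (C i).2.edges)

/-- The coordinate sum `x + y + z` of a vertex of `(ZMod m)³`. -/
def sum3 {m : ℕ} (u : ZMod m × ZMod m × ZMod m) : ZMod m := u.1 + u.2.1 + u.2.2

/-- The edge class `X`: direction-1 edges whose lower endpoint has coordinate sum
`≠ -1`, together with direction-2 edges whose lower endpoint has coordinate sum `= -1`. -/
def classX (m : ℕ) : SimpleGraph (ZMod m × ZMod m × ZMod m) :=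
  SimpleGraph.fromRel (fun u v =>
    (v = (u.1 + 1, u.2.1, u.2.2) ∧ sum3 u ≠ -1) ∨
    (v = (u.1, u.2.1 + 1, u.2.2) ∧ sum3 u = -1))

/-- The edge class `Y`: direction-2 edges whose lower endpoint has coordinate sum
`≠ -1`, together with direction-3 edges whose lower endpoint has coordinate sum `= -1`. -/
def classY (m : ℕ) : SimpleGraph (ZMod m × ZMod m × ZMod m) :=
  SimpleGraph.fromRel (fun u v =>
    (v = (u.1, u.2.1 + 1, u.2.2) ∧ sum3 u ≠ -1) ∨
    (v = (u.1, u.2.1, u.2.2 + 1) ∧ sum3 u = -1))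

/-- The edge class `Z`: direction-3 edges whose lower endpoint has coordinate sum
`≠ -1`, together with direction-1 edges whose lower endpoint has coordinate sum `= -1`. -/
def classZ (m : ℕ) : SimpleGraph (ZMod m × ZMod m × ZMod m) :=
  SimpleGraph.fromRel (fun u v =>
    (v = (u.1, u.2.1, u.2.2 + 1) ∧ sum3 u ≠ -1) ∨
    (v = (u.1 + 1, u.2.1, u.2.2) ∧ sum3 u = -1))

namespace XYZaux

variable {V : Type*} {G : SimpleGraph V} {f : V → V}

def iterWalk (hf : ∀ u, G.Adj u (f u)) : (k : ℕ) → (v : V) → G.Walk v (f^[k] v)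
  | 0, _ => SimpleGraph.Walk.nil
  | k+1, v => (SimpleGraph.Walk.cons (hf v) (iterWalk hf k (f v))).copy rfl
      (Function.iterate_succ_apply f k v).symm

lemma iterWalk_support (hf : ∀ u, G.Adj u (f u)) (k : ℕ) (v : V) :
    (iterWalk hf k v).support = (List.range (k+1)).map (fun i => f^[i] v) := by
  induction k generalizing v with
  | zero => simp [iterWalk]
  | succ k ih =>
    rw [iterWalk]
    rw [SimpleGraph.Walk.support_copy, SimpleGraph.Walk.support_cons, ih (f v)]
    rw [List.range_succ_eq_map (n := k+1)]
    simp [List.map_map, Function.comp_def, Function.iterate_succ_apply]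

lemma iterWalk_length (hf : ∀ u, G.Adj u (f u)) (k : ℕ) (v : V) :
    (iterWalk hf k v).length = k := by
  induction k generalizing v with
  | zero => rfl
  | succ k ih => rw [iterWalk]; simp [ih]

lemma iterWalk_edges (hf : ∀ u, G.Adj u (f u)) (k : ℕ) (v : V) :
    (iterWalk hf k v).edges = (List.range k).map (fun i => s(f^[i] v, f^[i+1] v)) := by
  induction k generalizing v with
  | zero => rfl
  | succ k ih =>
    rw [iterWalk]
    rw [SimpleGraph.Walk.edges_copy, SimpleGraph.Walk.edges_cons, ih (f v)]
    rw [List.range_succ_eq_map (n := k)]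
    simp [List.map_map, Function.comp_def, Function.iterate_succ_apply]

section Main

variable {m : ℕ} (hm : 4 ≤ m) (θ : V ≃ ZMod (m^2) × ZMod m)
  (hθ : ∀ u, θ (f u) = ((θ u).1 + 1, (θ u).2))
  (hAdj : ∀ u v, G.Adj u v ↔ u ≠ v ∧ (v = f u ∨ u = f v))

include hθ in
lemma iter_theta (k : ℕ) (u : V) :
    θ (f^[k] u) = ((θ u).1 + (k : ZMod (m^2)), (θ u).2) := by
  induction k generalizing u with
  | zero => simp
  | succ k ih =>
    rw [Function.iterate_succ_apply', hθ, ih u]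
    refine Prod.ext ?_ rfl
    push_cast
    ring

include hm hθ in
lemma iter_eq_iff (k l : ℕ) (u : V) :
    f^[k] u = f^[l] u ↔ (k : ZMod (m^2)) = (l : ZMod (m^2)) := by
  constructor
  · intro h
    have := congrArg θ h
    rw [iter_theta θ hθ, iter_theta θ hθ] at this
    have h1 := congrArg Prod.fst this
    simpa using h1
  · intro h
    apply θ.injective
    rw [iter_theta θ hθ, iter_theta θ hθ, h]

include hm hθ in
lemma iter_period (u : V) : f^[m^2] u = u := by
  apply θ.injective
  rw [iter_theta θ hθ, ZMod.natCast_self]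
  simp

include hm hθ in
lemma f_inj : Function.Injective f := by
  intro a b h
  have ha := iter_period (f := f) hm θ hθ a
  have hb := iter_period (f := f) hm θ hθ b
  have hpos : 1 ≤ m^2 := by nlinarith
  have h2 : m^2 = (m^2 - 1) + 1 := by omega
  rw [h2, Function.iterate_succ_apply] at ha hb
  rw [h] at ha
  exact ha.symm.trans hb

include hm hθ in
lemma iter_eq_nat (k l : ℕ) (hk : k < m^2) (hl : l < m^2) (u : V)
    (h : f^[k] u = f^[l] u) : k = l := by
  have hc := (iter_eq_iff (f := f) hm θ hθ k l u).mp h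
  haveI : NeZero (m^2) := ⟨by positivity⟩
  have h2 : k % m^2 = l % m^2 := by
    rwa [ZMod.natCast_eq_natCast_iff, Nat.ModEq] at hc
  rwa [Nat.mod_eq_of_lt hk, Nat.mod_eq_of_lt hl] at h2

include hm hθ hAdj in
lemma abstract_main :
    (∀ v, (G.neighborSet v).ncard = 2) ∧
    (∀ v, ∃ w : G.Walk v v, w.IsCycle ∧ w.length = m^2 ∧
      ∀ u, u ∈ w.support ↔ G.Reachable v u) ∧
    Nat.card G.ConnectedComponent = m := by
  haveI : NeZero (m^2) := ⟨by positivity⟩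
  have hm2 : 2 < m^2 := by nlinarith
  have hfne : ∀ u, u ≠ f u := by
    intro u h
    have : f^[1] u = f^[0] u := by simpa using h.symm
    have := iter_eq_nat hm θ hθ 1 0 (by omega) (by omega) u this
    omega
  have hf2ne : ∀ u, u ≠ f (f u) := by
    intro u h
    have : f^[2] u = f^[0] u := by simpa [Function.iterate_succ_apply] using h.symm
    have := iter_eq_nat hm θ hθ 2 0 (by omega) (by omega) u this
    omega
  have hfAdj : ∀ u, G.Adj u (f u) := fun u => (hAdj u (f u)).mpr ⟨hfne u, Or.inl rfl⟩
  set finv : V → V := fun u => f^[m^2 - 1] u with hfinv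
  have hmm : m^2 = (m^2 - 1) + 1 := by omega
  have hf_finv : ∀ u, f (finv u) = u := by
    intro u
    have := iter_period (f := f) hm θ hθ u
    rwa [hmm, Function.iterate_succ_apply'] at this
  have hfinv_f : ∀ u, finv (f u) = u := by
    intro u
    have := iter_period (f := f) hm θ hθ u
    rwa [hmm, Function.iterate_succ_apply] at this
  have hreach : ∀ (k : ℕ) (u : V), G.Reachable u (f^[k] u) := by
    intro k
    induction k with
    | zero => exact fun u => by simpa using Reachable.refl u
    | succ k ih =>
      intro u
      refine (ih u).trans ?_
      rw [Function.iterate_succ_apply']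
      exact (hfAdj _).reachable
  refine ⟨?_, ?_, ?_⟩
  · -- degrees
    intro v
    have hset : G.neighborSet v = {f v, finv v} := by
      ext u
      simp only [mem_neighborSet, Set.mem_insert_iff, Set.mem_singleton_iff]
      rw [hAdj]
      constructor
      · rintro ⟨hne, h | h⟩
        · exact Or.inl h
        · exact Or.inr (by rw [h, hfinv_f])
      · rintro (h | h)
        · exact ⟨fun hh => hfne v (hh.trans h), Or.inl h⟩
        · refine ⟨?_, Or.inr (by rw [h, hf_finv])⟩
          intro hh
          have hv : v = finv v := hh.trans h
          have h2 : f v = v := by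
            calc f v = f (finv v) := by rw [← hv]
            _ = v := hf_finv v
          exact hfne v h2.symm
    rw [hset]
    apply Set.ncard_pair
    intro h
    have := congrArg f h
    rw [hf_finv] at this
    exact hf2ne v this.symm
  · -- cycles
    intro v
    have hginj : ∀ i j, i < m^2 → j < m^2 → f^[i] v = f^[j] v → i = j :=
      fun i j hi hj h => iter_eq_nat hm θ hθ i j hi hj v h
    refine ⟨(iterWalk hfAdj (m^2) v).copy rfl (iter_period hm θ hθ v), ?_, ?_, ?_⟩
    · constructor
      constructor
      · -- trail
        constructor
        rw [SimpleGraph.Walk.edges_copy, iterWalk_edges]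
        refine List.Nodup.map_on ?_ List.nodup_range
        intro i hi j hj hij
        rw [List.mem_range] at hi hj
        rw [Sym2.eq_iff] at hij
        rcases hij with ⟨h1, _⟩ | ⟨h1, h2⟩
        · exact hginj i j hi hj h1
        · exfalso
          have c1 := (iter_eq_iff (f := f) hm θ hθ i (j+1) v).mp h1
          have c2 := (iter_eq_iff (f := f) hm θ hθ (i+1) j v).mp h2
          push_cast at c1 c2
          have : (2 : ZMod (m^2)) = 0 := by linear_combination c2 - c1
          have h4 : ((2:ℕ) : ZMod (m^2)) = ((0:ℕ) : ZMod (m^2)) := by push_cast; exact this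
          rw [ZMod.natCast_eq_natCast_iff, Nat.modEq_zero_iff_dvd] at h4
          have := Nat.le_of_dvd (by norm_num) h4
          omega
      · -- nonempty
        intro h
        have hl := congrArg SimpleGraph.Walk.length h
        rw [SimpleGraph.Walk.length_copy, iterWalk_length] at hl
        simp at hl
        omega
      · -- support tail nodup
        rw [SimpleGraph.Walk.support_copy, iterWalk_support,
          List.range_succ_eq_map, List.map_cons, List.tail_cons, List.map_map]
        refine List.Nodup.map_on ?_ List.nodup_range
        intro i hi j hj hij
        rw [List.mem_range] at hi hj
        simp only [Function.comp_apply] at hij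
        rw [Function.iterate_succ_apply', Function.iterate_succ_apply'] at hij
        exact hginj i j hi hj (f_inj hm θ hθ hij)
    · rw [SimpleGraph.Walk.length_copy, iterWalk_length]
    · intro u
      rw [SimpleGraph.Walk.support_copy, iterWalk_support]
      constructor
      · intro hu
        rw [List.mem_map] at hu
        obtain ⟨i, _, hiu⟩ := hu
        exact hiu ▸ hreach i v
      · intro hu
        have horbit : ∀ {a b : V} (_ : G.Walk a b), ∃ k, b = f^[k] a := by
          intro a b p
          induction p with
          | nil => exact ⟨0, rfl⟩
          | @cons x y z hxy q ih =>
            obtain ⟨k, hk⟩ := ih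
            rcases (hAdj x y).mp hxy with ⟨_, hy | hx⟩
            · exact ⟨k + 1, by rw [hk, hy, ← Function.iterate_succ_apply]⟩
            · refine ⟨k + (m^2 - 1), ?_⟩
              have : y = finv x := by rw [hx, hfinv_f]
              rw [hk, this, hfinv, Function.iterate_add_apply]
        obtain ⟨k, hk⟩ := horbit hu.some
        have hmod : f^[k] v = f^[k % m^2] v := by
          apply (iter_eq_iff (f := f) hm θ hθ _ _ v).mpr
          rw [ZMod.natCast_eq_natCast_iff]
          exact (Nat.mod_modEq k (m^2)).symm
        rw [List.mem_map]
        exact ⟨k % m^2, List.mem_range.mpr (by have := Nat.mod_lt k (y := m^2) (by positivity); omega),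
          by rw [← hmod, ← hk]⟩
  · -- component count
    have hwpres : ∀ (a b : V) (p : G.Walk a b), p.IsPath → (θ a).2 = (θ b).2 := by
      intro a b p hp
      clear hp
      induction p with
      | nil => rfl
      | @cons x y z hxy q ih =>
        have hstep : (θ x).2 = (θ y).2 := by
          rcases (hAdj x y).mp hxy with ⟨_, hy | hx⟩
          · rw [hy, hθ]
          · rw [hx, hθ]
        rw [hstep]; exact ih
    refine Eq.trans (Nat.card_congr (Equiv.ofBijective
      (ConnectedComponent.lift (fun u => (θ u).2) hwpres) ⟨?_, ?_⟩)) (Nat.card_zmod m)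
    · intro c d h
      obtain ⟨u, rfl⟩ := c.exists_rep
      obtain ⟨w, rfl⟩ := d.exists_rep
      have h' : (θ u).2 = (θ w).2 := h
      apply ConnectedComponent.sound
      have hval : ((((θ w).1 - (θ u).1).val : ℕ) : ZMod (m^2)) = (θ w).1 - (θ u).1 := by
        simp [ZMod.natCast_val, ZMod.cast_id]
      have hk : f^[((θ w).1 - (θ u).1).val] u = w := by
        apply θ.injective
        rw [iter_theta θ hθ, hval]
        exact Prod.ext (by ring) h'
      exact hk ▸ hreach _ u
    · intro z
      refine ⟨G.connectedComponentMk (θ.symm ((0 : ZMod (m^2)), z)), ?_⟩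
      show (θ (θ.symm ((0 : ZMod (m^2)), z))).2 = z
      rw [Equiv.apply_symm_apply]

end Main


variable {m : ℕ}

/-- successor map for class X -/
def fX (u : ZMod m × ZMod m × ZMod m) : ZMod m × ZMod m × ZMod m :=
  if sum3 u = -1 then (u.1, u.2.1 + 1, u.2.2) else (u.1 + 1, u.2.1, u.2.2)

def fY (u : ZMod m × ZMod m × ZMod m) : ZMod m × ZMod m × ZMod m :=
  if sum3 u = -1 then (u.1, u.2.1, u.2.2 + 1) else (u.1, u.2.1 + 1, u.2.2)

def fZ (u : ZMod m × ZMod m × ZMod m) : ZMod m × ZMod m × ZMod m :=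
  if sum3 u = -1 then (u.1 + 1, u.2.1, u.2.2) else (u.1, u.2.1, u.2.2 + 1)

lemma natCast_sub_one_eq_neg_one (hm : 4 ≤ m) : ((m - 1 : ℕ) : ZMod m) = -1 := by
  rw [Nat.cast_sub (by omega), ZMod.natCast_self, zero_sub, Nat.cast_one]

lemma val_neg_one' (hm : 4 ≤ m) : (-1 : ZMod m).val = m - 1 := by
  rw [← natCast_sub_one_eq_neg_one hm, ZMod.val_cast_of_lt (by omega)]

lemma self_natCast_val (hm : 4 ≤ m) (a : ZMod m) : ((a.val : ℕ) : ZMod m) = a := by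
  haveI : NeZero m := ⟨by omega⟩
  simp [ZMod.natCast_val, ZMod.cast_id]

def thetaX (hm : 4 ≤ m) : (ZMod m × ZMod m × ZMod m) ≃ ZMod (m ^ 2) × ZMod m where
  toFun u := ((((sum3 u).val + m * u.2.1.val : ℕ) : ZMod (m ^ 2)), u.2.2)
  invFun p := (((p.1.val % m : ℕ) : ZMod m) - ((p.1.val / m : ℕ) : ZMod m) - p.2,
    ((p.1.val / m : ℕ) : ZMod m), p.2)
  left_inv := by
    haveI : NeZero m := ⟨by omega⟩
    haveI : NeZero (m ^ 2) := ⟨by positivity⟩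
    intro u
    have hs := ZMod.val_lt (sum3 u)
    have hy := ZMod.val_lt u.2.1
    have hc : (sum3 u).val + m * u.2.1.val < m ^ 2 := by rw [pow_two]; nlinarith
    have hval : (((((sum3 u).val + m * u.2.1.val : ℕ)) : ZMod (m ^ 2)).val)
        = (sum3 u).val + m * u.2.1.val := ZMod.val_cast_of_lt hc
    simp only [hval]
    have hmod : ((sum3 u).val + m * u.2.1.val) % m = (sum3 u).val := by
      rw [Nat.add_mul_mod_self_left, Nat.mod_eq_of_lt hs]
    have hdiv : ((sum3 u).val + m * u.2.1.val) / m = u.2.1.val := by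
      rw [Nat.add_mul_div_left _ _ (show 0 < m by omega), Nat.div_eq_of_lt hs, zero_add]
    rw [hmod, hdiv, self_natCast_val hm, self_natCast_val hm]
    refine Prod.ext ?_ rfl
    show sum3 u - u.2.1 - u.2.2 = u.1
    rw [sum3]; ring
  right_inv := by
    haveI : NeZero m := ⟨by omega⟩
    haveI : NeZero (m ^ 2) := ⟨by positivity⟩
    intro p
    have hlt := ZMod.val_lt p.1
    refine Prod.ext ?_ rfl
    show ((((sum3 _).val + m * ((((p.1.val / m : ℕ)) : ZMod m)).val : ℕ)) : ZMod (m ^ 2)) = p.1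
    have hsum : sum3 ((((p.1.val % m : ℕ) : ZMod m) - ((p.1.val / m : ℕ) : ZMod m) - p.2,
        ((p.1.val / m : ℕ) : ZMod m), p.2)) = ((p.1.val % m : ℕ) : ZMod m) := by
      rw [sum3]; ring
    rw [hsum, ZMod.val_natCast, ZMod.val_natCast, Nat.mod_mod_of_dvd _ (dvd_refl m)]
    have hdlt : p.1.val / m < m := by
      rw [Nat.div_lt_iff_lt_mul (show 0 < m by omega), ← pow_two]; exact hlt
    rw [Nat.mod_eq_of_lt hdlt, Nat.mod_add_div, self_natCast_val (by nlinarith : 4 ≤ m ^ 2)]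

lemma sum3_fX (u : ZMod m × ZMod m × ZMod m) : sum3 (fX u) = sum3 u + 1 := by
  rw [fX]; split <;> (rw [sum3, sum3]; ring)

lemma thetaX_fX (hm : 4 ≤ m) (u : ZMod m × ZMod m × ZMod m) :
    thetaX hm (fX u) = ((thetaX hm u).1 + 1, (thetaX hm u).2) := by
  haveI : NeZero m := ⟨by omega⟩
  haveI : Fact (1 < m) := ⟨by omega⟩
  have hsum := sum3_fX u
  by_cases hs : sum3 u = -1
  · have h0 : sum3 (fX u) = 0 := by rw [hsum, hs, neg_add_cancel]
    have hfx : fX u = (u.1, u.2.1 + 1, u.2.2) := by rw [fX, if_pos hs]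
    refine Prod.ext ?_ ?_
    · show ((((sum3 (fX u)).val + m * (fX u).2.1.val : ℕ)) : ZMod (m ^ 2))
        = (((sum3 u).val + m * u.2.1.val : ℕ)) + 1
      rw [h0, ZMod.val_zero, hfx, hs, val_neg_one' hm]
      show (((0 + m * (u.2.1 + 1).val : ℕ)) : ZMod (m ^ 2)) = _
      rw [ZMod.val_add, ZMod.val_one]
      have h1 : ((m - 1 + m * u.2.1.val : ℕ) : ZMod (m ^ 2)) + 1
          = ((m - 1 + m * u.2.1.val + 1 : ℕ) : ZMod (m ^ 2)) := by push_cast; ring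
      rw [h1]
      rw [ZMod.natCast_eq_natCast_iff]
      have h2 : m - 1 + m * u.2.1.val + 1 = m * (u.2.1.val + 1) := by
        have h3 : m - 1 + 1 = m := by omega
        calc m - 1 + m * u.2.1.val + 1 = (m - 1 + 1) + m * u.2.1.val := by ring
        _ = m + m * u.2.1.val := by rw [h3]
        _ = m * (u.2.1.val + 1) := by ring
      rw [h2, zero_add, pow_two]
      exact Nat.ModEq.mul_left' m (Nat.mod_modEq _ m)
    · show (fX u).2.2 = u.2.2
      rw [hfx]
  · have hfx : fX u = (u.1 + 1, u.2.1, u.2.2) := by rw [fX, if_neg hs]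
    have hvs : (sum3 u).val ≠ m - 1 := by
      intro h
      apply hs
      rw [← self_natCast_val hm (sum3 u), h, natCast_sub_one_eq_neg_one hm]
    have hlt := ZMod.val_lt (sum3 u)
    have hval : (sum3 (fX u)).val = (sum3 u).val + 1 := by
      rw [hsum, ZMod.val_add, ZMod.val_one, Nat.mod_eq_of_lt (by omega)]
    refine Prod.ext ?_ ?_
    · show ((((sum3 (fX u)).val + m * (fX u).2.1.val : ℕ)) : ZMod (m ^ 2))
        = (((sum3 u).val + m * u.2.1.val : ℕ)) + 1
      rw [hval, hfx]
      show ((((sum3 u).val + 1 + m * u.2.1.val : ℕ)) : ZMod (m ^ 2)) = _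
      push_cast
      ring
    · show (fX u).2.2 = u.2.2
      rw [hfx]

/-- rotation of coordinates -/
def rotE : (ZMod m × ZMod m × ZMod m) ≃ (ZMod m × ZMod m × ZMod m) where
  toFun u := (u.2.1, u.2.2, u.1)
  invFun u := (u.2.2, u.1, u.2.1)
  left_inv u := rfl
  right_inv u := rfl

lemma sum3_rotE (u : ZMod m × ZMod m × ZMod m) : sum3 (rotE u) = sum3 u := by
  simp only [sum3, rotE, Equiv.coe_fn_mk]
  ring

lemma rotE_fY (u : ZMod m × ZMod m × ZMod m) : rotE (fY u) = fX (rotE u) := by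
  by_cases hs : sum3 u = -1
  · have hs' : sum3 (rotE u) = -1 := by rwa [sum3_rotE]
    rw [fY, fX, if_pos hs, if_pos hs']
    rfl
  · have hs' : sum3 (rotE u) ≠ -1 := by rwa [sum3_rotE]
    rw [fY, fX, if_neg hs, if_neg hs']
    rfl

lemma rotE_fZ (u : ZMod m × ZMod m × ZMod m) : rotE (fZ u) = fY (rotE u) := by
  by_cases hs : sum3 u = -1
  · have hs' : sum3 (rotE u) = -1 := by rwa [sum3_rotE]
    rw [fZ, fY, if_pos hs, if_pos hs']
    rfl
  · have hs' : sum3 (rotE u) ≠ -1 := by rwa [sum3_rotE]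
    rw [fZ, fY, if_neg hs, if_neg hs']
    rfl

def thetaY (hm : 4 ≤ m) : (ZMod m × ZMod m × ZMod m) ≃ ZMod (m ^ 2) × ZMod m :=
  rotE.trans (thetaX hm)

def thetaZ (hm : 4 ≤ m) : (ZMod m × ZMod m × ZMod m) ≃ ZMod (m ^ 2) × ZMod m :=
  rotE.trans (thetaY hm)

lemma thetaY_fY (hm : 4 ≤ m) (u : ZMod m × ZMod m × ZMod m) :
    thetaY hm (fY u) = ((thetaY hm u).1 + 1, (thetaY hm u).2) := by
  show thetaX hm (rotE (fY u)) = _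
  rw [rotE_fY, thetaX_fX]
  rfl

lemma thetaZ_fZ (hm : 4 ≤ m) (u : ZMod m × ZMod m × ZMod m) :
    thetaZ hm (fZ u) = ((thetaZ hm u).1 + 1, (thetaZ hm u).2) := by
  show thetaY hm (rotE (fZ u)) = _
  rw [rotE_fZ, thetaY_fY]
  rfl

lemma adjX (hm : 4 ≤ m) (u v : ZMod m × ZMod m × ZMod m) :
    (classX m).Adj u v ↔ u ≠ v ∧ (v = fX u ∨ u = fX v) := by
  rw [classX, SimpleGraph.fromRel_adj]
  have h : ∀ a b : ZMod m × ZMod m × ZMod m,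
      ((b = (a.1 + 1, a.2.1, a.2.2) ∧ sum3 a ≠ -1) ∨
       (b = (a.1, a.2.1 + 1, a.2.2) ∧ sum3 a = -1)) ↔ b = fX a := by
    intro a b
    by_cases hs : sum3 a = -1 <;> simp [fX, hs]
  rw [h, h]

lemma adjY (hm : 4 ≤ m) (u v : ZMod m × ZMod m × ZMod m) :
    (classY m).Adj u v ↔ u ≠ v ∧ (v = fY u ∨ u = fY v) := by
  rw [classY, SimpleGraph.fromRel_adj]
  have h : ∀ a b : ZMod m × ZMod m × ZMod m,
      ((b = (a.1, a.2.1 + 1, a.2.2) ∧ sum3 a ≠ -1) ∨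
       (b = (a.1, a.2.1, a.2.2 + 1) ∧ sum3 a = -1)) ↔ b = fY a := by
    intro a b
    by_cases hs : sum3 a = -1 <;> simp [fY, hs]
  rw [h, h]

lemma adjZ (hm : 4 ≤ m) (u v : ZMod m × ZMod m × ZMod m) :
    (classZ m).Adj u v ↔ u ≠ v ∧ (v = fZ u ∨ u = fZ v) := by
  rw [classZ, SimpleGraph.fromRel_adj]
  have h : ∀ a b : ZMod m × ZMod m × ZMod m,
      ((b = (a.1, a.2.1, a.2.2 + 1) ∧ sum3 a ≠ -1) ∨
       (b = (a.1 + 1, a.2.1, a.2.2) ∧ sum3 a = -1)) ↔ b = fZ a := by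
    intro a b
    by_cases hs : sum3 a = -1 <;> simp [fZ, hs]
  rw [h, h]



variable {m : ℕ}

lemma sum3_fY (u : ZMod m × ZMod m × ZMod m) : sum3 (fY u) = sum3 u + 1 := by
  rw [fY]; split <;> (rw [sum3, sum3]; ring)

lemma sum3_fZ (u : ZMod m × ZMod m × ZMod m) : sum3 (fZ u) = sum3 u + 1 := by
  rw [fZ]; split <;> (rw [sum3, sum3]; ring)

lemma one_ne_zero' (hm : 4 ≤ m) : (1 : ZMod m) ≠ 0 := by
  intro h
  have h' : ((1 : ℕ) : ZMod m) = ((0 : ℕ) : ZMod m) := by push_cast; exact h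
  rw [ZMod.natCast_eq_natCast_iff, Nat.ModEq] at h'
  rw [Nat.mod_eq_of_lt (show 1 < m by omega), Nat.zero_mod] at h'
  omega

lemma two_ne_zero' (hm : 4 ≤ m) : (2 : ZMod m) ≠ 0 := by
  intro h
  have h' : ((2 : ℕ) : ZMod m) = ((0 : ℕ) : ZMod m) := by push_cast; exact h
  rw [ZMod.natCast_eq_natCast_iff, Nat.ModEq] at h'
  rw [Nat.mod_eq_of_lt (show 2 < m by omega), Nat.zero_mod] at h'
  omega

lemma fX_ne_fY (hm : 4 ≤ m) (u : ZMod m × ZMod m × ZMod m) : fX u ≠ fY u := by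
  intro h
  rw [fX, fY] at h
  split_ifs at h
  · have := congrArg (fun p => p.2.1) h
    simp only at this
    exact one_ne_zero' hm (by rwa [add_eq_left] at this)
  · have := congrArg (fun p => p.1) h
    simp only at this
    exact one_ne_zero' hm (by rwa [add_eq_left] at this)

lemma fX_ne_fZ (hm : 4 ≤ m) (u : ZMod m × ZMod m × ZMod m) : fX u ≠ fZ u := by
  intro h
  rw [fX, fZ] at h
  split_ifs at h
  · have := congrArg (fun p => p.2.1) h
    simp only at this
    exact one_ne_zero' hm (by rwa [add_eq_left] at this)
  · have := congrArg (fun p => p.1) h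
    simp only at this
    exact one_ne_zero' hm (by rwa [add_eq_left] at this)

lemma fY_ne_fZ (hm : 4 ≤ m) (u : ZMod m × ZMod m × ZMod m) : fY u ≠ fZ u := by
  intro h
  rw [fY, fZ] at h
  split_ifs at h
  · have := congrArg (fun p => p.2.2) h
    simp only at this
    exact one_ne_zero' hm (by rwa [add_eq_left] at this)
  · have := congrArg (fun p => p.2.1) h
    simp only at this
    exact one_ne_zero' hm (by rwa [add_eq_left] at this)

lemma cross_impossible (hm : 4 ≤ m) {f g : ZMod m × ZMod m × ZMod m → ZMod m × ZMod m × ZMod m}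
    (hf : ∀ w, sum3 (f w) = sum3 w + 1) (hg : ∀ w, sum3 (g w) = sum3 w + 1)
    {u v : ZMod m × ZMod m × ZMod m} (h1 : v = f u) (h2 : u = g v) : False := by
  have : sum3 u = sum3 u + 2 := by
    calc sum3 u = sum3 (g v) := by rw [← h2]
    _ = sum3 v + 1 := hg v
    _ = sum3 (f u) + 1 := by rw [← h1]
    _ = sum3 u + 1 + 1 := by rw [hf u]
    _ = sum3 u + 2 := by ring
  exact two_ne_zero' hm (by rwa [left_eq_add] at this)

lemma disjXY (hm : 4 ≤ m) (u v : ZMod m × ZMod m × ZMod m) :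
    (classX m).Adj u v → (classY m).Adj u v → False := by
  intro hX hY
  rw [adjX hm] at hX
  rw [adjY hm] at hY
  obtain ⟨-, hx⟩ := hX
  obtain ⟨-, hy⟩ := hY
  rcases hx with h | h <;> rcases hy with h' | h'
  · exact fX_ne_fY hm u (h.symm.trans h')
  · exact cross_impossible hm sum3_fX sum3_fY h h'
  · exact cross_impossible hm sum3_fY sum3_fX h' h
  · exact fX_ne_fY hm v (h.symm.trans h')

lemma disjXZ (hm : 4 ≤ m) (u v : ZMod m × ZMod m × ZMod m) :
    (classX m).Adj u v → (classZ m).Adj u v → False := by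
  intro hX hZ
  rw [adjX hm] at hX
  rw [adjZ hm] at hZ
  obtain ⟨-, hx⟩ := hX
  obtain ⟨-, hz⟩ := hZ
  rcases hx with h | h <;> rcases hz with h' | h'
  · exact fX_ne_fZ hm u (h.symm.trans h')
  · exact cross_impossible hm sum3_fX sum3_fZ h h'
  · exact cross_impossible hm sum3_fZ sum3_fX h' h
  · exact fX_ne_fZ hm v (h.symm.trans h')

lemma disjYZ (hm : 4 ≤ m) (u v : ZMod m × ZMod m × ZMod m) :
    (classY m).Adj u v → (classZ m).Adj u v → False := by
  intro hY hZ
  rw [adjY hm] at hY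
  rw [adjZ hm] at hZ
  obtain ⟨-, hy⟩ := hY
  obtain ⟨-, hz⟩ := hZ
  rcases hy with h | h <;> rcases hz with h' | h'
  · exact fY_ne_fZ hm u (h.symm.trans h')
  · exact cross_impossible hm sum3_fY sum3_fZ h h'
  · exact cross_impossible hm sum3_fZ sum3_fY h' h
  · exact fY_ne_fZ hm v (h.symm.trans h')

lemma cover (u v : ZMod m × ZMod m × ZMod m) :
    (v = fX u ∨ v = fY u ∨ v = fZ u) ↔
      (v = (u.1 + 1, u.2.1, u.2.2) ∨ v = (u.1, u.2.1 + 1, u.2.2) ∨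
       v = (u.1, u.2.1, u.2.2 + 1)) := by
  by_cases hs : sum3 u = -1 <;> rw [fX, fY, fZ] <;> simp only [hs, if_pos, if_neg, if_true,
    if_false, reduceIte] <;> tauto

lemma cyc_adj (a b : ZMod m) : (cycGraph m).Adj a b ↔ a ≠ b ∧ (a - b = 1 ∨ b - a = 1) := by
  rw [cycGraph, SimpleGraph.fromRel_adj]

lemma box_adj_iff (hm : 4 ≤ m) (u v : ZMod m × ZMod m × ZMod m) :
    (cycGraph m □ (cycGraph m □ cycGraph m)).Adj u v ↔
      ((v = (u.1 + 1, u.2.1, u.2.2) ∨ v = (u.1, u.2.1 + 1, u.2.2) ∨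
        v = (u.1, u.2.1, u.2.2 + 1)) ∨
       (u = (v.1 + 1, v.2.1, v.2.2) ∨ u = (v.1, v.2.1 + 1, v.2.2) ∨
        u = (v.1, v.2.1, v.2.2 + 1))) := by
  have hne1 : ∀ a : ZMod m, a ≠ a + 1 := by
    intro a h
    exact one_ne_zero' hm (by rwa [left_eq_add] at h)
  rw [SimpleGraph.boxProd_adj, SimpleGraph.boxProd_adj, cyc_adj, cyc_adj, cyc_adj]
  constructor
  · rintro (⟨⟨hne, h | h⟩, he⟩ | ⟨⟨⟨hne, h | h⟩, he2⟩ | ⟨⟨hne, h | h⟩, he2⟩, he⟩)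
    · exact Or.inr (Or.inl (Prod.ext (sub_eq_iff_eq_add'.mp h) he))
    · exact Or.inl (Or.inl (Prod.ext (sub_eq_iff_eq_add'.mp h) he.symm))
    · exact Or.inr (Or.inr (Or.inl (Prod.ext he (Prod.ext (sub_eq_iff_eq_add'.mp h) he2))))
    · exact Or.inl (Or.inr (Or.inl (Prod.ext he.symm (Prod.ext (sub_eq_iff_eq_add'.mp h) he2.symm))))
    · exact Or.inr (Or.inr (Or.inr (Prod.ext he (Prod.ext he2 (sub_eq_iff_eq_add'.mp h)))))
    · exact Or.inl (Or.inr (Or.inr (Prod.ext he.symm (Prod.ext he2.symm (sub_eq_iff_eq_add'.mp h)))))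
  · rintro ((h | h | h) | (h | h | h))
    · rw [h]; exact Or.inl ⟨⟨hne1 u.1, Or.inr (add_sub_cancel_left u.1 1)⟩, rfl⟩
    · rw [h]; exact Or.inr ⟨Or.inl ⟨⟨hne1 u.2.1, Or.inr (add_sub_cancel_left u.2.1 1)⟩, rfl⟩, rfl⟩
    · rw [h]; exact Or.inr ⟨Or.inr ⟨⟨hne1 u.2.2, Or.inr (add_sub_cancel_left u.2.2 1)⟩, rfl⟩, rfl⟩
    · rw [h]; exact Or.inl ⟨⟨(hne1 v.1).symm, Or.inl (add_sub_cancel_left v.1 1)⟩, rfl⟩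
    · rw [h]; exact Or.inr ⟨Or.inl ⟨⟨(hne1 v.2.1).symm, Or.inl (add_sub_cancel_left v.2.1 1)⟩, rfl⟩, rfl⟩
    · rw [h]; exact Or.inr ⟨Or.inr ⟨⟨(hne1 v.2.2).symm, Or.inl (add_sub_cancel_left v.2.2 1)⟩, rfl⟩, rfl⟩

lemma ne_fX (hm : 4 ≤ m) (u : ZMod m × ZMod m × ZMod m) : u ≠ fX u := by
  have hne1 : ∀ a : ZMod m, a ≠ a + 1 := fun a h =>
    one_ne_zero' hm (by rwa [left_eq_add] at h)
  rw [fX]; split <;> intro h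
  · exact hne1 u.2.1 (congrArg (fun p => p.2.1) h)
  · exact hne1 u.1 (congrArg (fun p => p.1) h)

lemma ne_fY (hm : 4 ≤ m) (u : ZMod m × ZMod m × ZMod m) : u ≠ fY u := by
  have hne1 : ∀ a : ZMod m, a ≠ a + 1 := fun a h =>
    one_ne_zero' hm (by rwa [left_eq_add] at h)
  rw [fY]; split <;> intro h
  · exact hne1 u.2.2 (congrArg (fun p => p.2.2) h)
  · exact hne1 u.2.1 (congrArg (fun p => p.2.1) h)

lemma ne_fZ (hm : 4 ≤ m) (u : ZMod m × ZMod m × ZMod m) : u ≠ fZ u := by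
  have hne1 : ∀ a : ZMod m, a ≠ a + 1 := fun a h =>
    one_ne_zero' hm (by rwa [left_eq_add] at h)
  rw [fZ]; split <;> intro h
  · exact hne1 u.1 (congrArg (fun p => p.1) h)
  · exact hne1 u.2.2 (congrArg (fun p => p.2.2) h)

lemma union_adj (hm : 4 ≤ m) (u v : ZMod m × ZMod m × ZMod m) :
    ((classX m).Adj u v ∨ (classY m).Adj u v ∨ (classZ m).Adj u v) ↔
      (cycGraph m □ (cycGraph m □ cycGraph m)).Adj u v := by
  rw [adjX hm, adjY hm, adjZ hm, box_adj_iff hm, ← cover u v, ← cover v u]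
  constructor
  · rintro (⟨hne, h | h⟩ | ⟨hne, h | h⟩ | ⟨hne, h | h⟩)
    · exact Or.inl (Or.inl h)
    · exact Or.inr (Or.inl h)
    · exact Or.inl (Or.inr (Or.inl h))
    · exact Or.inr (Or.inr (Or.inl h))
    · exact Or.inl (Or.inr (Or.inr h))
    · exact Or.inr (Or.inr (Or.inr h))
  · rintro ((h | h | h) | (h | h | h))
    · exact Or.inl ⟨fun hh => ne_fX hm u (hh.trans h), Or.inl h⟩
    · exact Or.inr (Or.inl ⟨fun hh => ne_fY hm u (hh.trans h), Or.inl h⟩)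
    · exact Or.inr (Or.inr ⟨fun hh => ne_fZ hm u (hh.trans h), Or.inl h⟩)
    · exact Or.inl ⟨fun hh => ne_fX hm v (hh.symm.trans h), Or.inr h⟩
    · exact Or.inr (Or.inl ⟨fun hh => ne_fY hm v (hh.symm.trans h), Or.inr h⟩)
    · exact Or.inr (Or.inr ⟨fun hh => ne_fZ hm v (hh.symm.trans h), Or.inr h⟩)

end XYZaux

/-- For `m = 4^n` (`n ≥ 1`), the classes `X, Y, Z` partition the edge set of
`G_{n,3} = C_m □ C_m □ C_m`; each class is 2-regular, each connected component of each
class is a cycle with exactly `4^{2n}` vertices, and each class has exactly `4^n`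
connected components; hence `G_{n,3}` decomposes into `3·4^n` cycles of length `4^{2n}`. -/
theorem classXYZ_decomposition (n : ℕ) (hn : 1 ≤ n) :
    ((classX (4 ^ n)).edgeSet ∪ (classY (4 ^ n)).edgeSet ∪ (classZ (4 ^ n)).edgeSet
      = (cycGraph (4 ^ n) □ (cycGraph (4 ^ n) □ cycGraph (4 ^ n))).edgeSet) ∧
    Disjoint (classX (4 ^ n)).edgeSet (classY (4 ^ n)).edgeSet ∧
    Disjoint (classX (4 ^ n)).edgeSet (classZ (4 ^ n)).edgeSet ∧
    Disjoint (classY (4 ^ n)).edgeSet (classZ (4 ^ n)).edgeSet ∧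
    (∀ A ∈ [classX (4 ^ n), classY (4 ^ n), classZ (4 ^ n)],
      (∀ v, (A.neighborSet v).ncard = 2) ∧
      (∀ v, ∃ w : A.Walk v v, w.IsCycle ∧ w.length = 4 ^ (2 * n) ∧
        ∀ u, u ∈ w.support ↔ A.Reachable v u) ∧
      Nat.card A.ConnectedComponent = 4 ^ n) := by
  have hm : 4 ≤ 4 ^ n := by
    calc 4 = 4 ^ 1 := (pow_one 4).symm
    _ ≤ 4 ^ n := Nat.pow_le_pow_right (by norm_num) hn
  have hlen : (4 : ℕ) ^ (2 * n) = (4 ^ n) ^ 2 := by rw [mul_comm, pow_mul]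
  have mainX := XYZaux.abstract_main (G := classX (4 ^ n)) (f := XYZaux.fX) hm
    (XYZaux.thetaX hm) (XYZaux.thetaX_fX hm) (XYZaux.adjX hm)
  have mainY := XYZaux.abstract_main (G := classY (4 ^ n)) (f := XYZaux.fY) hm
    (XYZaux.thetaY hm) (XYZaux.thetaY_fY hm) (XYZaux.adjY hm)
  have mainZ := XYZaux.abstract_main (G := classZ (4 ^ n)) (f := XYZaux.fZ) hm
    (XYZaux.thetaZ hm) (XYZaux.thetaZ_fZ hm) (XYZaux.adjZ hm)
  refine ⟨?_, ?_, ?_, ?_, ?_⟩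
  · ext e
    induction e using Sym2.ind with
    | _ u v =>
      simp only [Set.mem_union, SimpleGraph.mem_edgeSet]
      rw [or_assoc]
      exact XYZaux.union_adj hm u v
  · rw [Set.disjoint_left]
    intro e
    induction e using Sym2.ind with
    | _ u v =>
      intro he he'
      exact XYZaux.disjXY hm u v (by simpa using he) (by simpa using he')
  · rw [Set.disjoint_left]
    intro e
    induction e using Sym2.ind with
    | _ u v =>
      intro he he'
      exact XYZaux.disjXZ hm u v (by simpa using he) (by simpa using he')
  · rw [Set.disjoint_left]
    intro e
    induction e using Sym2.ind with
    | _ u v =>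
      intro he he'
      exact XYZaux.disjYZ hm u v (by simpa using he) (by simpa using he')
  · intro A hA
    simp only [List.mem_cons, List.not_mem_nil, or_false] at hA
    rcases hA with rfl | rfl | rfl
    · refine ⟨mainX.1, fun v => ?_, mainX.2.2⟩
      obtain ⟨w, hc, hl, hs⟩ := mainX.2.1 v
      exact ⟨w, hc, by rw [hlen]; exact hl, hs⟩
    · refine ⟨mainY.1, fun v => ?_, mainY.2.2⟩
      obtain ⟨w, hc, hl, hs⟩ := mainY.2.1 v
      exact ⟨w, hc, by rw [hlen]; exact hl, hs⟩
    · refine ⟨mainZ.1, fun v => ?_, mainZ.2.2⟩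
      obtain ⟨w, hc, hl, hs⟩ := mainZ.2.1 v
      exact ⟨w, hc, by rw [hlen]; exact hl, hs⟩
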